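/- Let A be the (N+1)×(N+1) matrix with N = C(w-1, s-1) defined by A_{00} = 0, A_{0j} = 1 and A_{i0} = −1 for i,j ≥ 1, and A_{ij} = x^{(i)} * x^{(j)} for i,j ≥ 1, where {x^{(i)}} enumerates Ω(w,s). Then, as p → 0, det A ~ N · p^{−s(N−1)} and the determinant of the lower-right N×N block B satisfies det B ~ p^{−sN}; consequently E(τ_{(w,s)}) = det B / det A ~ 1/(N p^s). -/

import Mathlib

open MeasureTheory ProbabilityTheory ENNReal Filter Matrix
open scoped Classical Topology

/-- The fair-odds "star product" of two binary strings `x` (length `k`) and `y`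
(length `m`): `x*y = Σ_{j=1}^{min(k,m)} ∏_{i=1}^{j} δ(x_i, y_{m-j+i})`, where
`δ(a,b) = 1/p_a` if `a = b` and `0` otherwise, with `p_1 = p`, `p_0 = 1-p`. -/
noncomputable def starProd (p : ℝ) (x y : List Bool) : ℝ :=
  ∑ j ∈ Finset.Icc 1 (min x.length y.length),
    ∏ i ∈ Finset.range j,
      (if x.getD i false = y.getD (y.length - j + i) false
       then (if x.getD i false then p else 1 - p)⁻¹ else 0)

lemma cnt_full (x : List Bool) :
    ∑ i ∈ Finset.range x.length, (if x.getD i false = true then (1:ℕ) else 0) = x.count true := by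
  induction x with
  | nil => simp
  | cons b l ih =>
    rw [List.length_cons, Finset.sum_range_succ']
    simp only [List.getD_cons_succ, List.getD_cons_zero, ih, List.count_cons]
    simp

lemma key_card (s : ℕ) (x y : List Bool)
    (hxh : x.head? = some true) (hxl : x.getLast? = some true) (hxc : x.count true = s)
    (hyh : y.head? = some true) (hyl : y.getLast? = some true) (hyc : y.count true = s)
    (j : ℕ) (hj1 : 1 ≤ j) (hjx : j ≤ x.length) (hjy : j ≤ y.length)
    (hmatch : ∀ i ∈ Finset.range j, x.getD i false = y.getD (y.length - j + i) false) :
    (∑ i ∈ Finset.range j, (if x.getD i false = true then (1:ℕ) else 0)) ≤ s ∧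
    ((∑ i ∈ Finset.range j, (if x.getD i false = true then (1:ℕ) else 0)) = s
      ↔ (x = y ∧ j = x.length)) := by
  set f : ℕ → ℕ := fun i => if x.getD i false = true then (1:ℕ) else 0 with hf
  set g : ℕ → ℕ := fun i => if y.getD i false = true then (1:ℕ) else 0 with hg
  have hxsplit : ∑ i ∈ Finset.range j, f i + ∑ i ∈ Finset.Ico j x.length, f i = s := by
    rw [Finset.range_eq_Ico, Finset.sum_Ico_consecutive _ (Nat.zero_le j) hjx,
      ← Finset.range_eq_Ico, cnt_full, hxc]
  have ha : ∑ i ∈ Finset.range j, f i ≤ s := by omega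
  refine ⟨ha, ?_, ?_⟩
  · -- a = s → x = y ∧ j = x.length
    intro has
    have has' : ∑ i ∈ Finset.range j, f i = s := has
    have hR : ∑ i ∈ Finset.Ico j x.length, f i = 0 := by omega
    have hjlen : j = x.length := by
      by_contra hne
      have hlt : j < x.length := lt_of_le_of_ne hjx hne
      have hmem : x.length - 1 ∈ Finset.Ico j x.length := by
        simp only [Finset.mem_Ico]; omega
      have hlast : x.getD (x.length - 1) false = true := by
        rw [List.getD_eq_getElem?_getD, ← List.getLast?_eq_getElem?, hxl]; rfl
      have := (Finset.sum_eq_zero_iff.mp hR) _ hmem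
      simp only [hf] at this
      rw [if_pos hlast] at this
      exact one_ne_zero this
    -- y-side
    have hb : ∑ i ∈ Finset.range j, g (y.length - j + i) = s := by
      rw [← has']
      refine Finset.sum_congr rfl fun i hi => ?_
      simp only [hf, hg, hmatch i hi]
    have hbIco : ∑ i ∈ Finset.Ico (y.length - j) y.length, g i = s := by
      rw [Finset.sum_Ico_eq_sum_range]
      have : y.length - (y.length - j) = j := by omega
      rw [this, ← hb]
    have hysplit : ∑ i ∈ Finset.range (y.length - j), g i
        + ∑ i ∈ Finset.Ico (y.length - j) y.length, g i = s := by
      rw [Finset.range_eq_Ico, Finset.sum_Ico_consecutive _ (Nat.zero_le _) (by omega),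
        ← Finset.range_eq_Ico, cnt_full, hyc]
    have hP : ∑ i ∈ Finset.range (y.length - j), g i = 0 := by omega
    have hjm : j = y.length := by
      by_contra hne
      have hlt : j < y.length := lt_of_le_of_ne hjy hne
      have hmem : 0 ∈ Finset.range (y.length - j) := by
        simp only [Finset.mem_range]; omega
      have hhead : y.getD 0 false = true := by
        rw [List.getD_eq_getElem?_getD, ← List.head?_eq_getElem?, hyh]; rfl
      have := (Finset.sum_eq_zero_iff.mp hP) _ hmem
      simp only [hg] at this
      rw [if_pos hhead] at this
      exact one_ne_zero this
    have hlen : x.length = y.length := by omega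
    refine ⟨List.ext_getElem hlen fun i h1 h2 => ?_, hjlen⟩
    have hi : i ∈ Finset.range j := by simp only [Finset.mem_range]; omega
    have := hmatch i hi
    have hmj : y.length - j = 0 := by omega
    rw [hmj, Nat.zero_add] at this
    rw [List.getD_eq_getElem?_getD, List.getD_eq_getElem?_getD,
      List.getElem?_eq_getElem h1, List.getElem?_eq_getElem h2] at this
    simpa using this
  · rintro ⟨rfl, rfl⟩
    rw [cnt_full, hxc]

lemma term_tendsto (s : ℕ) (x y : List Bool)
    (hxh : x.head? = some true) (hxl : x.getLast? = some true) (hxc : x.count true = s)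
    (hyh : y.head? = some true) (hyl : y.getLast? = some true) (hyc : y.count true = s)
    (j : ℕ) (hj1 : 1 ≤ j) (hjx : j ≤ x.length) (hjy : j ≤ y.length) :
    Tendsto (fun p : ℝ => p ^ s * ∏ i ∈ Finset.range j,
        (if x.getD i false = y.getD (y.length - j + i) false
         then (if x.getD i false then p else 1 - p)⁻¹ else 0))
      (𝓝[>] (0:ℝ)) (𝓝 (if x = y ∧ j = x.length then 1 else 0)) := by
  by_cases hm : ∀ i ∈ Finset.range j, x.getD i false = y.getD (y.length - j + i) false
  · set a : ℕ := ((Finset.range j).filter (fun i => x.getD i false = true)).card with ha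
    have hasum : a = ∑ i ∈ Finset.range j, (if x.getD i false = true then (1:ℕ) else 0) :=
      Finset.card_filter _ _
    obtain ⟨hle, hiff⟩ := key_card s x y hxh hxl hxc hyh hyl hyc j hj1 hjx hjy hm
    rw [← hasum] at hle hiff
    have hprod : ∀ p : ℝ, (∏ i ∈ Finset.range j,
        (if x.getD i false = y.getD (y.length - j + i) false
         then (if x.getD i false then p else 1 - p)⁻¹ else 0))
        = (p⁻¹) ^ a * ((1 - p)⁻¹) ^ (j - a) := by
      intro p
      have h1 : (∏ i ∈ Finset.range j,
          (if x.getD i false = y.getD (y.length - j + i) false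
           then (if x.getD i false then p else 1 - p)⁻¹ else 0))
          = ∏ i ∈ Finset.range j, (if x.getD i false = true then p⁻¹ else (1 - p)⁻¹) := by
        refine Finset.prod_congr rfl fun i hi => ?_
        rw [if_pos (hm i hi), apply_ite Inv.inv]
      rw [h1, Finset.prod_ite, Finset.prod_const, Finset.prod_const, ← ha]
      congr 2
      have := Finset.card_filter_add_card_filter_not (s := Finset.range j)
        (p := fun i => x.getD i false = true)
      simp only [Finset.card_range] at this
      omega
    have hev : ∀ᶠ p in 𝓝[>] (0:ℝ), p ^ s * (p⁻¹ ^ a * ((1 - p)⁻¹) ^ (j - a))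
        = p ^ (s - a) * ((1 - p)⁻¹) ^ (j - a) := by
      filter_upwards [self_mem_nhdsWithin] with p (hp : 0 < p)
      have hp0 : p ≠ 0 := ne_of_gt hp
      have h2 : p ^ s * p⁻¹ ^ a = p ^ (s - a) := by
        rw [inv_pow, ← div_eq_mul_inv]
        exact (pow_sub₀ p hp0 hle).symm
      rw [← mul_assoc, h2]
    have hcont : ContinuousAt (fun p : ℝ => p ^ (s - a) * ((1 - p)⁻¹) ^ (j - a)) 0 := by
      refine (continuousAt_pow _ _).mul (ContinuousAt.pow ?_ _)
      exact (continuousAt_const.sub continuousAt_id).inv₀ (by norm_num)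
    have hlim : Tendsto (fun p : ℝ => p ^ (s - a) * ((1 - p)⁻¹) ^ (j - a)) (𝓝[>] (0:ℝ))
        (𝓝 ((0:ℝ) ^ (s - a) * ((1 - (0:ℝ))⁻¹) ^ (j - a))) :=
      (hcont.tendsto).mono_left nhdsWithin_le_nhds
    have hval : ((0:ℝ) ^ (s - a) * ((1 - (0:ℝ))⁻¹) ^ (j - a))
        = (if x = y ∧ j = x.length then 1 else 0) := by
      by_cases hsa : a = s
      · rw [if_pos (hiff.mp hsa), hsa, Nat.sub_self]
        norm_num
      · rw [if_neg (fun h => hsa (hiff.mpr h)), zero_pow (by omega), zero_mul]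
    refine Tendsto.congr' ?_ (hval ▸ hlim)
    filter_upwards [hev] with p hp
    rw [← hp, hprod]
  · push_neg at hm
    obtain ⟨i, hi, hne⟩ := hm
    have hzero : ∀ p : ℝ, (∏ i ∈ Finset.range j,
        (if x.getD i false = y.getD (y.length - j + i) false
         then (if x.getD i false then p else 1 - p)⁻¹ else 0)) = 0 := fun p =>
      Finset.prod_eq_zero hi (if_neg hne)
    have hcond : ¬(x = y ∧ j = x.length) := by
      rintro ⟨rfl, rfl⟩
      exact hne (by rw [Nat.sub_self, Nat.zero_add])
    simp only [hzero, mul_zero, if_neg hcond]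
    exact tendsto_const_nhds

lemma star_tendsto (s : ℕ) (x y : List Bool)
    (hxh : x.head? = some true) (hxl : x.getLast? = some true) (hxc : x.count true = s)
    (hyh : y.head? = some true) (hyl : y.getLast? = some true) (hyc : y.count true = s) :
    Tendsto (fun p : ℝ => p ^ s * starProd p x y) (𝓝[>] (0:ℝ))
      (𝓝 (if x = y then 1 else 0)) := by
  have hxlen : 1 ≤ x.length := by
    cases x with
    | nil => simp at hxh
    | cons b l => simp [List.length_cons]
  have hsum : Tendsto (fun p : ℝ => ∑ j ∈ Finset.Icc 1 (min x.length y.length),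
      p ^ s * ∏ i ∈ Finset.range j,
        (if x.getD i false = y.getD (y.length - j + i) false
         then (if x.getD i false then p else 1 - p)⁻¹ else 0))
      (𝓝[>] (0:ℝ))
      (𝓝 (∑ j ∈ Finset.Icc 1 (min x.length y.length),
        (if x = y ∧ j = x.length then (1:ℝ) else 0))) := by
    refine tendsto_finset_sum _ fun j hj => ?_
    rw [Finset.mem_Icc] at hj
    exact term_tendsto s x y hxh hxl hxc hyh hyl hyc j hj.1
      (le_trans hj.2 (min_le_left _ _)) (le_trans hj.2 (min_le_right _ _))
  have hval : (∑ j ∈ Finset.Icc 1 (min x.length y.length),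
      (if x = y ∧ j = x.length then (1:ℝ) else 0)) = if x = y then 1 else 0 := by
    by_cases hxy : x = y
    · subst hxy
      rw [if_pos rfl, min_self]
      simp only [eq_self_iff_true, true_and]
      rw [Finset.sum_ite_eq' (Finset.Icc 1 x.length) x.length (fun _ => (1:ℝ)),
        if_pos (by rw [Finset.mem_Icc]; exact ⟨hxlen, le_refl _⟩)]
    · simp [hxy]
  rw [← hval]
  refine hsum.congr fun p => ?_
  rw [starProd, Finset.mul_sum]

/-- Asymptotics, as `p → 0⁺`, of the determinants of the martingale-method linear
system: with `N = C(w-1, s-1)`, an enumeration `e` of the ending patterns `Ω(w,s)`,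
the bordered matrix `A p` (top-left `0`, top row `1`s, first column `-1`s, and star
products in the lower-right block) and the `N × N` star-product matrix `B p`, one has
`det (A p) ~ N p^{-s(N-1)}`, `det (B p) ~ p^{-sN}`; consequently, the expected
waiting time `E p = det (B p) / det (A p)` satisfies `E p ~ 1/(N p^s)`. -/
theorem stmt_18 (w s : ℕ) (hs : 1 ≤ s) (hsw : s ≤ w)
    (N : ℕ) (hN : N = (w - 1).choose (s - 1))
    (e : Fin N → List Bool) (he : Function.Injective e)
    (hrange : ∀ x : List Bool, x ∈ Set.range e ↔
      (x.length ≤ w ∧ x.head? = some true ∧ x.getLast? = some true ∧ x.count true = s))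
    (A : ℝ → Matrix (Fin (N + 1)) (Fin (N + 1)) ℝ)
    (hA : ∀ p, A p = Matrix.of fun i j =>
      if hi : i = 0 then (if j = 0 then 0 else 1)
      else if hj : j = 0 then -1
      else starProd p (e (i.pred hi)) (e (j.pred hj)))
    (B : ℝ → Matrix (Fin N) (Fin N) ℝ)
    (hB : ∀ p, B p = Matrix.of fun i j => starProd p (e i) (e j))
    (E : ℝ → ℝ)
    (hE : ∀ p ∈ Set.Ioo (0 : ℝ) 1, E p = (B p).det / (A p).det) :
    Tendsto (fun p : ℝ => (A p).det * p ^ (s * (N - 1))) (𝓝[>] 0) (𝓝 (N : ℝ))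
    ∧ Tendsto (fun p : ℝ => (B p).det * p ^ (s * N)) (𝓝[>] 0) (𝓝 1)
    ∧ Tendsto (fun p : ℝ => E p * ((N : ℝ) * p ^ s)) (𝓝[>] 0) (𝓝 1) := by
  have hNpos : 0 < N := by
    rw [hN]; exact Nat.choose_pos (by omega)
  have hprop : ∀ i : Fin N, (e i).head? = some true ∧ (e i).getLast? = some true
      ∧ (e i).count true = s := fun i => ((hrange (e i)).mp ⟨i, rfl⟩).2
  -- B part
  set F : ℝ → Matrix (Fin N) (Fin N) ℝ :=
    fun p => Matrix.of fun i j => p ^ s * starProd p (e i) (e j) with hF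
  have hFB : ∀ p : ℝ, (F p).det = (B p).det * p ^ (s * N) := by
    intro p
    have h1 : F p = (p ^ s) • B p := by
      rw [hB]; ext i j
      simp [hF]
    rw [h1, Matrix.det_smul, Fintype.card_fin, ← pow_mul]
    ring
  have hFlim : Tendsto F (𝓝[>] (0:ℝ)) (𝓝 (1 : Matrix (Fin N) (Fin N) ℝ)) := by
    refine tendsto_pi_nhds.mpr fun i => ?_
    rw [tendsto_pi_nhds]; intro j
    have h := star_tendsto s (e i) (e j) (hprop i).1 (hprop i).2.1 (hprop i).2.2
      (hprop j).1 (hprop j).2.1 (hprop j).2.2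
    have hval : (1 : Matrix (Fin N) (Fin N) ℝ) i j = (if e i = e j then (1:ℝ) else 0) := by
      rw [Matrix.one_apply]
      by_cases hij : i = j
      · rw [if_pos hij, if_pos (by rw [hij])]
      · rw [if_neg hij, if_neg (fun h' => hij (he h'))]
    rw [hval]
    exact h
  have hdetcontB : Continuous (Matrix.det : Matrix (Fin N) (Fin N) ℝ → ℝ) :=
    Continuous.matrix_det continuous_id
  have hB2 : Tendsto (fun p : ℝ => (B p).det * p ^ (s * N)) (𝓝[>] 0) (𝓝 1) := by
    have h2 := (hdetcontB.tendsto (1 : Matrix (Fin N) (Fin N) ℝ)).comp hFlim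
    rw [Matrix.det_one] at h2
    exact h2.congr fun p => hFB p
  -- A part
  set G : ℝ → Matrix (Fin (N+1)) (Fin (N+1)) ℝ := fun p => Matrix.of fun i j =>
    if hi : i = 0 then (if j = 0 then (0:ℝ) else 1)
    else if hj : j = 0 then -1
    else p ^ s * starProd p (e (i.pred hi)) (e (j.pred hj)) with hG
  have hGA : ∀ p : ℝ, p ≠ 0 → (G p).det = (A p).det * p ^ (s * (N - 1)) := by
    intro p hp
    have key : (G p).updateRow 0 ((p ^ s) • (G p 0)) =
        A p * Matrix.diagonal (fun j : Fin (N+1) => if j = 0 then (1:ℝ) else p ^ s) := by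
      rw [hA]; ext i j
      rw [Matrix.mul_diagonal]
      by_cases hi : i = 0
      · subst hi
        rw [Matrix.updateRow_self]
        by_cases hj : j = 0
        · subst hj; simp [hG]
        · simp [hG, hj]
      · rw [Matrix.updateRow_ne hi]
        by_cases hj : j = 0
        · subst hj; simp [hG, hi]
        · simp [hG, hi, hj, mul_comm]
    have hdiag : (Matrix.diagonal (fun j : Fin (N+1) => if j = 0 then (1:ℝ) else p ^ s)).det
        = (p ^ s) ^ N := by
      rw [Matrix.det_diagonal,
        ← Finset.mul_prod_erase Finset.univ _ (Finset.mem_univ (0 : Fin (N+1))),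
        if_pos rfl, one_mul,
        Finset.prod_congr rfl (fun j hj => if_neg (Finset.ne_of_mem_erase hj)),
        Finset.prod_const, Finset.card_erase_of_mem (Finset.mem_univ _),
        Finset.card_univ, Fintype.card_fin, Nat.add_sub_cancel]
    have hd := congrArg Matrix.det key
    rw [Matrix.det_updateRow_smul, Matrix.updateRow_eq_self, Matrix.det_mul, hdiag] at hd
    have hps : (p:ℝ) ^ s ≠ 0 := pow_ne_zero _ hp
    have hNN : ((p:ℝ) ^ s) ^ N = (p ^ s) ^ (N - 1) * p ^ s := by
      conv_lhs => rw [show N = (N - 1) + 1 by omega]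
      rw [pow_succ]
    rw [hNN] at hd
    have hd2 : (G p).det * p ^ s = ((A p).det * (p ^ s) ^ (N - 1)) * p ^ s := by
      linear_combination hd
    have := mul_right_cancel₀ hps hd2
    rw [this, ← pow_mul]
  set LA : Matrix (Fin (N+1)) (Fin (N+1)) ℝ := Matrix.of fun i j =>
    if i = 0 then (if j = 0 then (0:ℝ) else 1)
    else if j = 0 then -1 else if i = j then 1 else 0 with hLA
  have hGlim : Tendsto G (𝓝[>] (0:ℝ)) (𝓝 LA) := by
    refine tendsto_pi_nhds.mpr fun i => ?_
    rw [tendsto_pi_nhds]; intro j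
    by_cases hi : i = 0
    · simp only [hG, hLA, Matrix.of_apply, dif_pos hi, if_pos hi]
      exact tendsto_const_nhds
    · by_cases hj : j = 0
      · simp only [hG, hLA, Matrix.of_apply, dif_neg hi, dif_pos hj, if_neg hi, if_pos hj]
        exact tendsto_const_nhds
      · simp only [hG, hLA, Matrix.of_apply, dif_neg hi, dif_neg hj, if_neg hi, if_neg hj]
        have h := star_tendsto s (e (i.pred hi)) (e (j.pred hj))
          (hprop _).1 (hprop _).2.1 (hprop _).2.2 (hprop _).1 (hprop _).2.1 (hprop _).2.2
        have hval : (if i = j then (1:ℝ) else 0)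
            = (if e (i.pred hi) = e (j.pred hj) then (1:ℝ) else 0) := by
          by_cases hij : i = j
          · rw [if_pos hij, if_pos (by subst hij; rfl)]
          · rw [if_neg hij, if_neg (fun h' => hij (by
              have := he h'
              rwa [Fin.pred_inj] at this))]
        rw [hval]
        exact h
  have hdetLA : LA.det = N := by
    have h1 := Matrix.det_updateRow_sum LAᵀ 0 (fun _ => (1:ℝ))
    simp only [one_smul] at h1
    have hsumrow : ∀ j : Fin (N+1), (∑ k : Fin (N+1), LAᵀ k) j
        = if j = 0 then (N:ℝ) else 0 := by
      intro j
      erw [Finset.sum_apply]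
      by_cases hj : j = 0
      · subst hj
        rw [if_pos rfl]
        have : ∀ k : Fin (N+1), LAᵀ k 0 = if k = 0 then (0:ℝ) else 1 := by
          intro k; simp [hLA, Matrix.transpose_apply]
        simp only [this]
        rw [← Finset.add_sum_erase Finset.univ _ (Finset.mem_univ (0 : Fin (N+1))),
          if_pos rfl, zero_add,
          Finset.sum_congr rfl (fun k hk => if_neg (Finset.ne_of_mem_erase hk)),
          Finset.sum_const, Finset.card_erase_of_mem (Finset.mem_univ _),
          Finset.card_univ, Fintype.card_fin]
        simp
      · rw [if_neg hj]
        have : ∀ k : Fin (N+1), LAᵀ k j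
            = if k = 0 then (-1:ℝ) else if j = k then 1 else 0 := by
          intro k
          simp [hLA, Matrix.transpose_apply, if_neg hj]
        simp only [this]
        rw [← Finset.add_sum_erase Finset.univ _ (Finset.mem_univ (0 : Fin (N+1))),
          if_pos rfl]
        rw [Finset.sum_congr rfl (fun k hk => if_neg (Finset.ne_of_mem_erase hk))]
        rw [Finset.sum_ite_eq (Finset.univ.erase (0 : Fin (N+1))) j (fun _ => (1:ℝ)),
          if_pos (Finset.mem_erase.mpr ⟨hj, Finset.mem_univ _⟩)]
        ring
    have hT' : LAᵀ.updateRow 0 (∑ k : Fin (N+1), LAᵀ k)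
        = Matrix.of (fun i j : Fin (N+1) =>
            if i = 0 then (if j = 0 then (N:ℝ) else 0) else LA j i) := by
      ext i j
      by_cases hi : i = 0
      · subst hi
        rw [Matrix.updateRow_self, hsumrow j, Matrix.of_apply, if_pos rfl]
      · rw [Matrix.updateRow_ne hi, Matrix.of_apply, if_neg hi, Matrix.transpose_apply]
    have htri : (Matrix.of (fun i j : Fin (N+1) =>
        if i = 0 then (if j = 0 then (N:ℝ) else 0) else LA j i)).BlockTriangular
        OrderDual.toDual := by
      intro i j hij
      have hlt : i < j := hij
      have hj0 : j ≠ 0 := by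
        intro h; subst h; exact absurd hlt (by simp [Fin.lt_iff_val_lt_val])
      by_cases hi : i = 0
      · simp [Matrix.of_apply, hi, hj0]
      · have hij' : j ≠ i := fun h => (ne_of_lt hlt) h.symm
        simp [Matrix.of_apply, hi, hj0, hLA, hij']
    have hdiagprod : ∏ i : Fin (N+1), (Matrix.of (fun i j : Fin (N+1) =>
        if i = 0 then (if j = 0 then (N:ℝ) else 0) else LA j i)) i i = N := by
      rw [← Finset.mul_prod_erase Finset.univ _ (Finset.mem_univ (0 : Fin (N+1)))]
      have h0 : (Matrix.of (fun i j : Fin (N+1) =>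
          if i = 0 then (if j = 0 then (N:ℝ) else 0) else LA j i)) 0 0 = N := by simp
      have hrest : ∀ i ∈ Finset.univ.erase (0 : Fin (N+1)),
          (Matrix.of (fun i j : Fin (N+1) =>
          if i = 0 then (if j = 0 then (N:ℝ) else 0) else LA j i)) i i = 1 := by
        intro i hi
        have hi0 : i ≠ 0 := Finset.ne_of_mem_erase hi
        simp [hi0, hLA]
      rw [h0, Finset.prod_congr rfl hrest, Finset.prod_const_one, mul_one]
    rw [← Matrix.det_transpose LA, ← h1, hT',
      Matrix.det_of_lowerTriangular _ htri, hdiagprod]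
  have hdetcontA : Continuous (Matrix.det : Matrix (Fin (N+1)) (Fin (N+1)) ℝ → ℝ) :=
    Continuous.matrix_det continuous_id
  have hA2 : Tendsto (fun p : ℝ => (A p).det * p ^ (s * (N - 1))) (𝓝[>] 0) (𝓝 (N:ℝ)) := by
    have h2 := (hdetcontA.tendsto LA).comp hGlim
    rw [hdetLA] at h2
    refine h2.congr' ?_
    filter_upwards [self_mem_nhdsWithin] with p (hp : (0:ℝ) < p)
    exact hGA p (ne_of_gt hp)
  refine ⟨hA2, hB2, ?_⟩
  -- E part
  have hNne : ((N:ℝ)) ≠ 0 := Nat.cast_ne_zero.mpr (by omega)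
  have hq : Tendsto (fun p : ℝ => ((N:ℝ) * ((B p).det * p ^ (s*N)))
      / ((A p).det * p ^ (s*(N-1)))) (𝓝[>] (0:ℝ)) (𝓝 (((N:ℝ) * 1) / N)) :=
    Tendsto.div (tendsto_const_nhds.mul hB2) hA2 hNne
  rw [mul_one, div_self hNne] at hq
  refine hq.congr' ?_
  filter_upwards [Ioo_mem_nhdsGT_of_mem (Set.mem_Ico.mpr ⟨le_refl (0:ℝ), one_pos⟩)]
    with p hp
  rw [hE p hp]
  have hd : (p:ℝ) ^ (s*(N-1)) ≠ 0 := pow_ne_zero _ (ne_of_gt hp.1)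
  have hpow : (p:ℝ) ^ (s*N) = p ^ (s*(N-1)) * p ^ s := by
    rw [← pow_add]
    congr 1
    conv_lhs => rw [show N = (N - 1) + 1 from by omega]
    rw [Nat.mul_add, mul_one]
  rw [hpow, show (N:ℝ) * ((B p).det * (p ^ (s*(N-1)) * p ^ s))
      = ((B p).det * ((N:ℝ) * p ^ s)) * p ^ (s*(N-1)) from by ring,
    mul_div_mul_right _ _ hd, div_mul_eq_mul_div, mul_div_assoc]
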